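/- Let N = W, let x, w ∈ ℂ^N, and let 0 < L < N be the step size. Define x'[n] = conj(w[n]) and w'[n] = conj(x[n]) for 0 ≤ n ≤ N−1. Then the phaseless blind STFT measurements of (x',w') coincide with those of (x,w): |ŷ'[k,m]| = |ŷ[k,m]| for every integer k and every m = 0,…,M−1. -/

import Mathlib

open Complex BigOperators

/-- Extension of a finite vector `w ∈ ℂ^W` to `ℤ` by zero outside `{0,…,W−1}`. -/
noncomputable def zext {W : ℕ} (w : Fin W → ℂ) (j : ℤ) : ℂ :=
  if h : 0 ≤ j ∧ j < (W : ℤ) then w ⟨j.toNat, by omega⟩ else 0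

/-- The blind short-time Fourier transform
`ŷ[k,m] = Σ_{n=0}^{N−1} x[n]·w[mL−n]·e^{−2πikn/N}`. -/
noncomputable def stft {N W : ℕ} (x : Fin N → ℂ) (w : Fin W → ℂ)
    (L : ℕ) (k : ℤ) (m : ℕ) : ℂ :=
  ∑ n : Fin N, x n * zext w ((m : ℤ) * L - (n : ℕ)) *
    Complex.exp (-(2 * (Real.pi : ℂ) * Complex.I * (k : ℂ) * ((n : ℕ) : ℂ)) / (N : ℂ))

lemma zext_conj {W : ℕ} (v : Fin W → ℂ) (j : ℤ) :
    zext (fun n => (starRingEnd ℂ) (v n)) j = (starRingEnd ℂ) (zext v j) := by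
  unfold zext
  split <;> simp

lemma zext_eq_zero {W : ℕ} (v : Fin W → ℂ) (j : ℤ) (h : ¬ (0 ≤ j ∧ j < (W : ℤ))) :
    zext v j = 0 := by
  unfold zext
  rw [dif_neg h]

/-- when `N = W`, the pair `(conj w, conj x)` has the same phaseless
blind STFT measurements as `(x, w)`. -/
theorem blind_stft_conjugate_swap_ambiguity
    {N L : ℕ} (hL : 0 < L) (hLN : L < N)
    (x w x' w' : Fin N → ℂ)
    (hx' : ∀ n : Fin N, x' n = (starRingEnd ℂ) (w n))
    (hw' : ∀ n : Fin N, w' n = (starRingEnd ℂ) (x n))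
    (k : ℤ) (m : ℕ) (hm : m < (N + N - 1 + L - 1) / L) :
    ‖stft x' w' L k m‖ = ‖stft x w L k m‖ := by
  classical
  -- the complex exponential as a function of an integer index
  set E : ℤ → ℂ := fun j =>
    Complex.exp (-(2 * (Real.pi : ℂ) * Complex.I * (k : ℂ) * (j : ℂ)) / (N : ℂ)) with hE
  set C : ℂ :=
    Complex.exp (-(2 * (Real.pi : ℂ) * Complex.I * (k : ℂ) * (((m : ℤ) * L : ℤ) : ℂ)) / (N : ℂ))
    with hC
  set σ : ℤ → ℤ := fun j => (m : ℤ) * L - j with hσ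
  set S : Finset ℤ := (Finset.range N).image (fun n : ℕ => (n : ℤ)) with hS
  set T : Finset ℤ := S ∪ S.image σ with hT
  have hmemS : ∀ j : ℤ, j ∈ S ↔ (0 ≤ j ∧ j < (N : ℤ)) := by
    intro j
    simp only [hS, Finset.mem_image, Finset.mem_range]
    constructor
    · rintro ⟨n, hn, rfl⟩; omega
    · rintro ⟨h0, h1⟩; exact ⟨j.toNat, by omega, by omega⟩
  have hσσ : ∀ j : ℤ, σ (σ j) = j := by intro j; simp [hσ]
  have hσT : ∀ j ∈ T, σ j ∈ T := by
    intro j hj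
    rw [hT, Finset.mem_union] at hj ⊢
    rcases hj with hj | hj
    · exact Or.inr (Finset.mem_image_of_mem _ hj)
    · rcases Finset.mem_image.mp hj with ⟨i, hi, rfl⟩
      exact Or.inl (by rw [hσσ]; exact hi)
  -- generic rewriting of the stft as a sum over T
  have key : ∀ u v : Fin N → ℂ,
      stft u v L k m = ∑ j ∈ T, zext u j * zext v (σ j) * E j := by
    intro u v
    have h1 : stft u v L k m = ∑ j ∈ S, zext u j * zext v (σ j) * E j := by
      unfold stft
      rw [hS, Finset.sum_image (by intro a _ b _ h; exact Nat.cast_injective h),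
        ← Fin.sum_univ_eq_sum_range]
      refine Finset.sum_congr rfl ?_
      intro n _
      have hu : zext u ((n : ℕ) : ℤ) = u n := by
        unfold zext
        rw [dif_pos ⟨by positivity, by exact_mod_cast n.2⟩]
        congr 1
      rw [hu]
      simp [hσ, hE]
    rw [h1]
    refine Finset.sum_subset (Finset.subset_union_left) ?_
    intro j hjT hjS
    rw [zext_eq_zero u j (by rw [← hmemS]; exact hjS)]
    ring
  -- the exponential identity
  have hEkey : ∀ j : ℤ, E (σ j) = C * (starRingEnd ℂ) (E j) := by
    intro j
    rw [hE, hC]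
    simp only
    rw [← Complex.exp_conj, ← Complex.exp_add]
    congr 1
    have : (starRingEnd ℂ) (-(2 * (Real.pi : ℂ) * Complex.I * (k : ℂ) * (j : ℂ)) / (N : ℂ))
        = (2 * (Real.pi : ℂ) * Complex.I * (k : ℂ) * (j : ℂ)) / (N : ℂ) := by
      simp only [map_div₀, map_neg, map_mul, Complex.conj_ofReal, Complex.conj_I,
        map_intCast, map_natCast, map_ofNat]
      ring
    rw [this, hσ]
    push_cast
    ring
  -- pointwise identity after the substitution j ↦ σ j
  have hpt : ∀ j : ℤ,
      zext x' (σ j) * zext w' (σ (σ j)) * E (σ j)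
        = C * (starRingEnd ℂ) (zext x j * zext w (σ j) * E j) := by
    intro j
    have hx'f : x' = fun n => (starRingEnd ℂ) (w n) := funext hx'
    have hw'f : w' = fun n => (starRingEnd ℂ) (x n) := funext hw'
    rw [hσσ, hx'f, hw'f, zext_conj, zext_conj, hEkey]
    simp only [map_mul]
    ring
  -- main identity
  have main : stft x' w' L k m = C * (starRingEnd ℂ) (stft x w L k m) := by
    rw [key x' w', key x w]
    have h1 : ∑ j ∈ T, zext x' j * zext w' (σ j) * E j
        = ∑ j ∈ T, C * (starRingEnd ℂ) (zext x j * zext w (σ j) * E j) := by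
      refine Finset.sum_equiv (Function.Involutive.toPerm σ hσσ) ?_ ?_
      · intro i
        constructor
        · intro hi; exact hσT i hi
        · intro hi
          have h2 : σ (σ i) ∈ T := hσT (σ i) hi
          rwa [hσσ] at h2
      · intro i _
        show zext x' i * zext w' (σ i) * E i
          = C * (starRingEnd ℂ) (zext x (σ i) * zext w (σ (σ i)) * E (σ i))
        simpa [hσσ] using hpt (σ i)
    rw [h1, ← Finset.mul_sum, ← map_sum]
  rw [main, norm_mul]
  have hCabs : ‖C‖ = 1 := by
    rw [hC]
    have : (-(2 * (Real.pi : ℂ) * Complex.I * (k : ℂ) * (((m : ℤ) * L : ℤ) : ℂ)) / (N : ℂ))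
        = ((-(2 * Real.pi * (k : ℝ) * ((m * L : ℕ) : ℝ)) / (N : ℝ) : ℝ) : ℂ) * Complex.I := by
      push_cast
      ring
    rw [this, Complex.norm_exp_ofReal_mul_I]
  rw [hCabs, one_mul, Complex.norm_conj]
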